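/- arXiv:1008.4371 — 2 statements merged into one kernel-verified Lean document; each statement's English description precedes it below -/
import Mathlib

section
/- Let X1, X2, X3 be Banach spaces with continuous imbeddings X1 ⊆ X2 ⊆ X3, and let 𝒟 be a group of linear operators g : X3 → X3 such that for each j = 1, 2, 3, every g ∈ 𝒟 maps X_j into X_j and acts isometrically on X_j. If at least one of the imbeddings X1 ⊆ X2 and X2 ⊆ X3 is 𝒟-cocompact, then the imbedding X1 ⊆ X3 is 𝒟-cocompact. -/
open Filter

/-- A sequence in a normed space converges weakly to `0`. -/
def WeakNull {X : Type*} [NormedAddCommGroup X] [NormedSpace ℝ X] (v : ℕ → X) : Prop :=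
  ∀ f : StrongDual ℝ X, Tendsto (fun k => f (v k)) atTop (nhds 0)

/-- Let `X1 ⊆ X2 ⊆ X3` be Banach spaces (the inclusions being realized by
injective continuous linear maps `i12`, `i23`), and let `D` be a group of linear bijections
of `X3` which map each `Xj` into itself and act isometrically on each `Xj` (the induced
actions on `X1`, `X2` being `T1`, `T2`).  If at least one of the imbeddings `X1 ⊆ X2`,
`X2 ⊆ X3` is `D`-cocompact, then the imbedding `X1 ⊆ X3` is `D`-cocompact. -/
theorem stmt0 (X1 X2 X3 : Type*)
    [NormedAddCommGroup X1] [NormedSpace ℝ X1] [CompleteSpace X1]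
    [NormedAddCommGroup X2] [NormedSpace ℝ X2] [CompleteSpace X2]
    [NormedAddCommGroup X3] [NormedSpace ℝ X3] [CompleteSpace X3]
    (i12 : X1 →L[ℝ] X2) (i23 : X2 →L[ℝ] X3)
    (h12 : Function.Injective i12) (h23 : Function.Injective i23)
    (D : Subgroup (X3 ≃ₗ[ℝ] X3))
    -- the induced actions of `D` on `X1` and on `X2`:
    (T1 : D → X1 →ₗ[ℝ] X1) (T2 : D → X2 →ₗ[ℝ] X2)
    (hT1 : ∀ g : D, ∀ x : X1, i12 (T1 g x) = T2 g (i12 x))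
    (hT2 : ∀ g : D, ∀ x : X2, i23 (T2 g x) = (g : X3 ≃ₗ[ℝ] X3) (i23 x))
    -- each `g ∈ D` maps `Xj` *onto* `Xj`:
    (hT1surj : ∀ g : D, Function.Surjective (T1 g))
    (hT2surj : ∀ g : D, Function.Surjective (T2 g))
    -- each `g ∈ D` acts isometrically on `X1`, `X2` and `X3`:
    (hiso1 : ∀ g : D, ∀ x : X1, ‖T1 g x‖ = ‖x‖)
    (hiso2 : ∀ g : D, ∀ x : X2, ‖T2 g x‖ = ‖x‖)
    (hiso3 : ∀ g : D, ∀ x : X3, ‖(g : X3 ≃ₗ[ℝ] X3) x‖ = ‖x‖)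
    -- at least one of the two imbeddings `X1 ⊆ X2`, `X2 ⊆ X3` is `D`-cocompact:
    (hcc :
      (∀ u : ℕ → X1, ∀ l : X1,
          (∀ g : ℕ → D, WeakNull fun k => T1 (g k) (u k - l)) →
          Tendsto (fun k => ‖i12 (u k) - i12 l‖) atTop (nhds 0)) ∨
      (∀ u : ℕ → X2, ∀ l : X2,
          (∀ g : ℕ → D, WeakNull fun k => T2 (g k) (u k - l)) →
          Tendsto (fun k => ‖i23 (u k) - i23 l‖) atTop (nhds 0))) :
    -- conclusion: the imbedding `X1 ⊆ X3` is `D`-cocompact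
    ∀ u : ℕ → X1, ∀ l : X1,
      (∀ g : ℕ → D, WeakNull fun k => T1 (g k) (u k - l)) →
      Tendsto (fun k => ‖i23 (i12 (u k)) - i23 (i12 l)‖) atTop (nhds 0) := by
  intro u l hu
  rcases hcc with h | h
  · -- X1 ⊆ X2 cocompact
    have h2 : Tendsto (fun k => ‖i12 (u k) - i12 l‖) atTop (nhds 0) := h u l hu
    have hb : ∀ k, ‖i23 (i12 (u k)) - i23 (i12 l)‖ ≤ ‖i23‖ * ‖i12 (u k) - i12 l‖ := by
      intro k
      calc ‖i23 (i12 (u k)) - i23 (i12 l)‖ = ‖i23 (i12 (u k) - i12 l)‖ := by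
            rw [map_sub]
        _ ≤ ‖i23‖ * ‖i12 (u k) - i12 l‖ := i23.le_opNorm _
    have : Tendsto (fun k => ‖i23‖ * ‖i12 (u k) - i12 l‖) atTop (nhds 0) := by
      simpa using h2.const_mul ‖i23‖
    exact squeeze_zero (fun k => norm_nonneg _) hb this
  · -- X2 ⊆ X3 cocompact
    have key : ∀ g : ℕ → D, WeakNull fun k => T2 (g k) (i12 (u k) - i12 l) := by
      intro g f
      have := hu g (f.comp i12)
      simp only [ContinuousLinearMap.comp_apply] at this
      have heq : ∀ k, f (i12 (T1 (g k) (u k - l))) = f (T2 (g k) (i12 (u k) - i12 l)) := by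
        intro k
        rw [hT1, map_sub]
      simpa only [heq] using this
    exact h (fun k => i12 (u k)) (i12 l) key
end

section
/- Suppose 1 ≤ p < ∞. For each k, n ∈ ℕ let y_k^{(n)} ∈ ℝ^N, and assume that for all m ≠ n, |y_k^{(m)} − y_k^{(n)}| → +∞ as k → ∞. Let (u_k) be a bounded sequence in L^p(ℝ^N) such that, for each n ∈ ℕ, the sequence u_k(· + y_k^{(n)}) converges weakly in L^p(ℝ^N) and almost everywhere to a function w^{(n)}. Then for every M ∈ ℕ, ∫_{ℝ^N} |u_k|^p dx − ∑_{n=1}^{M} ∫_{ℝ^N} |w^{(n)}|^p dx − ∫_{ℝ^N} |u_k − ∑_{n=1}^{M} w^{(n)}(· − y_k^{(n)})|^p dx → 0 as k → ∞. -/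
open MeasureTheory Filter ENNReal

noncomputable section

lemma stmt17_ineq (p : ℝ) (hp : 1 ≤ p) {ε : ℝ} (hε : 0 < ε) :
    ∃ C : ℝ, 0 ≤ C ∧ ∀ a b : ℝ, abs (|a + b| ^ p - |a| ^ p) ≤ ε * |a| ^ p + C * |b| ^ p := by
  have hp0 : 0 < p := lt_of_lt_of_le one_pos hp
  -- choose δ
  have hc1 : ContinuousAt (fun t : ℝ => (1 + t) ^ p) 0 := by
    exact ((continuous_const.add continuous_id).rpow_const fun _ => Or.inr hp0.le).continuousAt
  have hc2 : ContinuousAt (fun t : ℝ => (1 - t) ^ p) 0 := by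
    exact ((continuous_const.sub continuous_id).rpow_const fun _ => Or.inr hp0.le).continuousAt
  have h1 : Tendsto (fun t : ℝ => (1 + t) ^ p) (nhds 0) (nhds 1) := by
    simpa using hc1.tendsto
  have h2 : Tendsto (fun t : ℝ => (1 - t) ^ p) (nhds 0) (nhds 1) := by
    simpa using hc2.tendsto
  have hev : ∀ᶠ t : ℝ in nhds 0, (1 + t) ^ p < 1 + ε ∧ 1 - ε < (1 - t) ^ p := by
    filter_upwards [h1.eventually_lt_const (by linarith : (1:ℝ) < 1 + ε),
      h2.eventually_const_lt (by linarith : 1 - ε < (1:ℝ))] with t ht1 ht2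
    exact ⟨ht1, ht2⟩
  obtain ⟨δ₀, hδ₀, hδball⟩ := Metric.eventually_nhds_iff_ball.1 hev
  set d : ℝ := min (δ₀ / 2) (1 / 2) with hd_def
  have hd0 : 0 < d := by positivity
  have hd1 : d ≤ 1 / 2 := min_le_right _ _
  have hdball : d ∈ Metric.ball (0 : ℝ) δ₀ := by
    rw [Metric.mem_ball, Real.dist_eq, sub_zero, abs_of_pos hd0]
    calc d ≤ δ₀ / 2 := min_le_left _ _
    _ < δ₀ := by linarith
  obtain ⟨hA, hB⟩ := hδball d hdball
  refine ⟨(1 + d⁻¹) ^ p + d⁻¹ ^ p, by positivity, fun a b => ?_⟩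
  have ha0 : (0:ℝ) ≤ |a| := abs_nonneg a
  have hb0 : (0:ℝ) ≤ |b| := abs_nonneg b
  have hap : (0:ℝ) ≤ |a| ^ p := Real.rpow_nonneg ha0 p
  have hbp : (0:ℝ) ≤ |b| ^ p := Real.rpow_nonneg hb0 p
  by_cases hab : |b| ≤ d * |a|
  · -- small perturbation case
    have h1' : |a + b| ≤ (1 + d) * |a| := by
      calc |a + b| ≤ |a| + |b| := abs_add_le a b
      _ ≤ (1 + d) * |a| := by nlinarith
    have h2' : (1 - d) * |a| ≤ |a + b| := by
      have : |a| ≤ |a + b| + |b| := by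
        calc |a| = |a + b + -b| := by ring_nf
        _ ≤ |a + b| + |-b| := abs_add_le _ _
        _ = |a + b| + |b| := by rw [abs_neg]
      nlinarith
    have h1p : |a + b| ^ p ≤ (1 + d) ^ p * |a| ^ p := by
      rw [← Real.mul_rpow (by linarith) ha0]
      exact Real.rpow_le_rpow (abs_nonneg _) h1' hp0.le
    have h2p : (1 - d) ^ p * |a| ^ p ≤ |a + b| ^ p := by
      rw [← Real.mul_rpow (by linarith) ha0]
      exact Real.rpow_le_rpow (by nlinarith) h2' hp0.le
    have hCb : 0 ≤ ((1 + d⁻¹) ^ p + d⁻¹ ^ p) * |b| ^ p := by positivity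
    rw [abs_le]
    constructor <;> nlinarith
  · push_neg at hab
    have hd' : |a| ≤ d⁻¹ * |b| := by
      have h := hab.le
      have hd0' : (0:ℝ) < d⁻¹ := by positivity
      nlinarith [mul_le_mul_of_nonneg_left h hd0'.le, inv_mul_cancel₀ hd0.ne']
    have h3 : |a + b| ≤ (1 + d⁻¹) * |b| := by
      calc |a + b| ≤ |a| + |b| := abs_add_le a b
      _ ≤ (1 + d⁻¹) * |b| := by nlinarith
    have h3p : |a + b| ^ p ≤ (1 + d⁻¹) ^ p * |b| ^ p := by
      rw [← Real.mul_rpow (by positivity) hb0]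
      exact Real.rpow_le_rpow (abs_nonneg _) h3 hp0.le
    have h4p : |a| ^ p ≤ d⁻¹ ^ p * |b| ^ p := by
      rw [← Real.mul_rpow (by positivity) hb0]
      exact Real.rpow_le_rpow ha0 hd' hp0.le
    have habp : (0:ℝ) ≤ |a + b| ^ p := Real.rpow_nonneg (abs_nonneg _) p
    have hεp : 0 ≤ ε * |a| ^ p := by positivity
    rw [abs_le]
    constructor <;> nlinarith

lemma stmt17_integral_rpow_le {α : Type*} [MeasurableSpace α] {μ : Measure α}
    (p : ℝ) (hp : 1 ≤ p) {h : α → ℝ} (hh : MemLp h (ENNReal.ofReal p) μ)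
    {D : ℝ≥0∞} (hD : D ≠ ⊤) (hle : eLpNorm h (ENNReal.ofReal p) μ ≤ D) :
    ∫ x, |h x| ^ p ∂μ ≤ D.toReal ^ p := by
  have hp0 : 0 < p := lt_of_lt_of_le one_pos hp
  have hq0 : ENNReal.ofReal p ≠ 0 := by simp [ENNReal.ofReal_eq_zero, not_le, hp0]
  have hqt : ENNReal.ofReal p ≠ ⊤ := ENNReal.ofReal_ne_top
  rw [hh.eLpNorm_eq_integral_rpow_norm hq0 hqt] at hle
  rw [ENNReal.toReal_ofReal hp0.le] at hle
  have hs0 : 0 ≤ ∫ x, ‖h x‖ ^ p ∂μ :=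
    integral_nonneg fun x => Real.rpow_nonneg (norm_nonneg _) p
  have hle' : (∫ x, ‖h x‖ ^ p ∂μ) ^ p⁻¹ ≤ D.toReal :=
    (ENNReal.ofReal_le_iff_le_toReal hD).1 hle
  have key : ∫ x, ‖h x‖ ^ p ∂μ ≤ D.toReal ^ p := by
    have := Real.rpow_le_rpow (Real.rpow_nonneg hs0 _) hle' hp0.le
    rwa [Real.rpow_inv_rpow hs0 hp0.ne'] at this
  simpa [Real.norm_eq_abs] using key

lemma stmt17_brezisLieb {α : Type*} [MeasurableSpace α] {μ : Measure α}
    (p : ℝ) (hp : 1 ≤ p) {f : ℕ → α → ℝ} {g : α → ℝ}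
    (hf : ∀ k, MemLp (f k) (ENNReal.ofReal p) μ) (hg : MemLp g (ENNReal.ofReal p) μ)
    (hbdd : ∃ B : ℝ, ∀ k, ∫ x, |f k x - g x| ^ p ∂μ ≤ B)
    (hae : ∀ᵐ x ∂μ, Tendsto (fun k => f k x) atTop (nhds (g x))) :
    Tendsto (fun k => (∫ x, |f k x| ^ p ∂μ) - ∫ x, |f k x - g x| ^ p ∂μ)
      atTop (nhds (∫ x, |g x| ^ p ∂μ)) := by
  have hp0 : 0 < p := lt_of_lt_of_le one_pos hp
  have hq0 : ENNReal.ofReal p ≠ 0 := by simp [ENNReal.ofReal_eq_zero, not_le, hp0]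
  have hqt : ENNReal.ofReal p ≠ ⊤ := ENNReal.ofReal_ne_top
  have hqr : (ENNReal.ofReal p).toReal = p := ENNReal.toReal_ofReal hp0.le
  have habs : Continuous (fun t : ℝ => |t| ^ p) :=
    continuous_abs.rpow_const fun _ => Or.inr hp0.le
  have hI1 : ∀ k, Integrable (fun x => |f k x| ^ p) μ := fun k => by
    have := (hf k).integrable_norm_rpow hq0 hqt
    simpa [Real.norm_eq_abs, hqr] using this
  have hfg : ∀ k, MemLp (fun x => f k x - g x) (ENNReal.ofReal p) μ := fun k => (hf k).sub hg
  have hI2 : ∀ k, Integrable (fun x => |f k x - g x| ^ p) μ := fun k => by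
    have := (hfg k).integrable_norm_rpow hq0 hqt
    simpa [Real.norm_eq_abs, hqr] using this
  have hI3 : Integrable (fun x => |g x| ^ p) μ := by
    have := hg.integrable_norm_rpow hq0 hqt
    simpa [Real.norm_eq_abs, hqr] using this
  obtain ⟨B, hB⟩ := hbdd
  have hB0 : (0:ℝ) ≤ B :=
    le_trans (integral_nonneg fun x => Real.rpow_nonneg (abs_nonneg _) p) (hB 0)
  have key : Tendsto (fun k => (∫ x, |f k x| ^ p ∂μ) - (∫ x, |f k x - g x| ^ p ∂μ)
      - ∫ x, |g x| ^ p ∂μ) atTop (nhds 0) := by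
    rw [NormedAddCommGroup.tendsto_nhds_zero]
    intro ε hε
    set ε' : ℝ := ε / (2 * (B + 1)) with hε'_def
    have hε' : 0 < ε' := by positivity
    obtain ⟨C, hC0, hC⟩ := stmt17_ineq p hp hε'
    -- the auxiliary functions
    set φ : ℝ × ℝ → ℝ := fun uv =>
      max (|(|uv.1| ^ p - |uv.1 - uv.2| ^ p - |uv.2| ^ p)| - ε' * |uv.1 - uv.2| ^ p) 0 with hφ_def
    have hφc : Continuous φ := by
      apply Continuous.max _ continuous_const
      apply Continuous.sub
      · apply Continuous.abs
        exact ((habs.comp continuous_fst).sub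
          (habs.comp (continuous_fst.sub continuous_snd))).sub (habs.comp continuous_snd)
      · exact continuous_const.mul (habs.comp (continuous_fst.sub continuous_snd))
    set h : ℕ → α → ℝ := fun k x => φ (f k x, g x) with hh_def
    have hmeas : ∀ k, AEStronglyMeasurable (h k) μ := fun k =>
      hφc.comp_aestronglyMeasurable ((hf k).aestronglyMeasurable.prodMk hg.aestronglyMeasurable)
    have hφ0 : ∀ uv : ℝ × ℝ, 0 ≤ φ uv := fun uv => le_max_right _ _
    have hGle : ∀ k x, |(|f k x| ^ p - |f k x - g x| ^ p - |g x| ^ p)|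
        ≤ ε' * |f k x - g x| ^ p + (C + 1) * |g x| ^ p := by
      intro k x
      have := hC (f k x - g x) (g x)
      rw [sub_add_cancel] at this
      have htri : |(|f k x| ^ p - |f k x - g x| ^ p - |g x| ^ p)|
          ≤ |(|f k x| ^ p - |f k x - g x| ^ p)| + |g x| ^ p := by
        have h1 : |(|f k x| ^ p - |f k x - g x| ^ p - |g x| ^ p)|
            ≤ |(|f k x| ^ p - |f k x - g x| ^ p)| + |(|g x| ^ p)| := abs_sub _ _
        have h2 : |(|g x| ^ p)| = |g x| ^ p := abs_of_nonneg (Real.rpow_nonneg (abs_nonneg _) p)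
        linarith [h1, h2.le, h2.ge]
      nlinarith [Real.rpow_nonneg (abs_nonneg (g x)) p]
    have hhle : ∀ k x, h k x ≤ (C + 1) * |g x| ^ p := by
      intro k x
      apply max_le _ (by positivity)
      have := hGle k x
      linarith
    have hbound_int : Integrable (fun x => (C + 1) * |g x| ^ p) μ := hI3.const_mul _
    have hhlim : ∀ᵐ x ∂μ, Tendsto (fun k => h k x) atTop (nhds 0) := by
      filter_upwards [hae] with x hx
      have hpair : Tendsto (fun k => (f k x, g x)) atTop (nhds (g x, g x)) :=
        hx.prodMk_nhds tendsto_const_nhds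
      have := (hφc.continuousAt (x := (g x, g x))).tendsto.comp hpair
      have hval : φ (g x, g x) = 0 := by
        simp [hφ_def, sub_self, abs_zero, Real.zero_rpow hp0.ne', mul_zero, sub_zero]
      rwa [hval] at this
    have hDCT : Tendsto (fun k => ∫ x, h k x ∂μ) atTop (nhds 0) := by
      have := tendsto_integral_of_dominated_convergence (fun x => (C + 1) * |g x| ^ p)
        hmeas hbound_int (fun k => ae_of_all _ fun x => by
          rw [Real.norm_eq_abs, abs_of_nonneg (hφ0 _)]
          exact hhle k x) hhlim
      simpa using this
    have hhint : ∀ k, Integrable (h k) μ := fun k =>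
      Integrable.mono' hbound_int (hmeas k)
        (ae_of_all _ fun x => by
          rw [Real.norm_eq_abs, abs_of_nonneg (hφ0 _)]; exact hhle k x)
    have hev2 : ∀ᶠ k in atTop, ∫ x, h k x ∂μ < ε / 2 :=
      hDCT.eventually_lt_const (by positivity)
    filter_upwards [hev2] with k hk
    have heq : (∫ x, |f k x| ^ p ∂μ) - (∫ x, |f k x - g x| ^ p ∂μ) - ∫ x, |g x| ^ p ∂μ
        = ∫ x, (|f k x| ^ p - |f k x - g x| ^ p - |g x| ^ p) ∂μ := by
      have hI12 : Integrable (fun x => |f k x| ^ p - |f k x - g x| ^ p) μ := (hI1 k).sub (hI2 k)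
      rw [integral_sub hI12 hI3, integral_sub (hI1 k) (hI2 k)]
    rw [Real.norm_eq_abs, heq]
    have habs_le : |∫ x, (|f k x| ^ p - |f k x - g x| ^ p - |g x| ^ p) ∂μ|
        ≤ ∫ x, |(|f k x| ^ p - |f k x - g x| ^ p - |g x| ^ p)| ∂μ := by
      simpa [Real.norm_eq_abs] using
        norm_integral_le_integral_norm (fun x => |f k x| ^ p - |f k x - g x| ^ p - |g x| ^ p) (μ := μ)
    have hGint : Integrable (fun x => |(|f k x| ^ p - |f k x - g x| ^ p - |g x| ^ p)|) μ :=
      (((hI1 k).sub (hI2 k)).sub hI3).abs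
    have hmono : ∫ x, |(|f k x| ^ p - |f k x - g x| ^ p - |g x| ^ p)| ∂μ
        ≤ ∫ x, (h k x + ε' * |f k x - g x| ^ p) ∂μ := by
      apply integral_mono hGint ((hhint k).add ((hI2 k).const_mul _))
      intro x
      have hml : |(|f k x| ^ p - |f k x - g x| ^ p - |g x| ^ p)|
          - ε' * |f k x - g x| ^ p ≤ h k x := le_max_left _ _
      simp only [Pi.add_apply]
      linarith [hml]
    have hsplit : ∫ x, (h k x + ε' * |f k x - g x| ^ p) ∂μ
        = (∫ x, h k x ∂μ) + ε' * ∫ x, |f k x - g x| ^ p ∂μ := by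
      rw [integral_add (hhint k) ((hI2 k).const_mul _), MeasureTheory.integral_const_mul]
    have hfinal : ε' * ∫ x, |f k x - g x| ^ p ∂μ ≤ ε / 2 := by
      have h1 : ε' * ∫ x, |f k x - g x| ^ p ∂μ ≤ ε' * B :=
        mul_le_mul_of_nonneg_left (hB k) hε'.le
      have h2 : ε' * B ≤ ε / 2 := by
        rw [hε'_def]
        rw [div_mul_eq_mul_div, div_le_div_iff₀ (by positivity) (by positivity)]
        nlinarith
      linarith
    calc |∫ x, (|f k x| ^ p - |f k x - g x| ^ p - |g x| ^ p) ∂μ|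
        ≤ ∫ x, |(|f k x| ^ p - |f k x - g x| ^ p - |g x| ^ p)| ∂μ := habs_le
      _ ≤ (∫ x, h k x ∂μ) + ε' * ∫ x, |f k x - g x| ^ p ∂μ := by rw [← hsplit]; exact hmono
      _ < ε / 2 + ε / 2 := by linarith
      _ = ε := by ring
  have := key.add (tendsto_const_nhds (x := ∫ x, |g x| ^ p ∂μ))
  simpa using this

lemma stmt17_escape {N : ℕ} (p : ℝ) (hp0 : 0 < p)
    {g : EuclideanSpace ℝ (Fin N) → ℝ} (hg : MemLp g (ENNReal.ofReal p) volume)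
    {z : ℕ → EuclideanSpace ℝ (Fin N)}
    (hz : Tendsto (fun k => ‖z k‖) atTop atTop) (R : ℝ) :
    Tendsto (fun k => ∫⁻ x in Metric.ball (0 : EuclideanSpace ℝ (Fin N)) R,
      (‖g (x + z k)‖₊ : ℝ≥0∞) ^ p ∂volume) atTop (nhds 0) := by
  have hq0 : ENNReal.ofReal p ≠ 0 := by simp [ENNReal.ofReal_eq_zero, not_le, hp0]
  have hqt : ENNReal.ofReal p ≠ ⊤ := ENNReal.ofReal_ne_top
  set F : EuclideanSpace ℝ (Fin N) → ℝ≥0∞ := fun x => (‖g x‖₊ : ℝ≥0∞) ^ p with hF_def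
  have hFm : AEMeasurable F volume := by
    exact ENNReal.continuous_rpow_const.measurable.comp_aemeasurable
      (hg.aestronglyMeasurable.aemeasurable.nnnorm.coe_nnreal_ennreal)
  have hFint : ∫⁻ x, F x ∂volume ≠ ⊤ := by
    have := lintegral_rpow_enorm_lt_top_of_eLpNorm_lt_top hq0 hqt hg.2
    rw [ENNReal.toReal_ofReal hp0.le] at this
    exact this.ne
  have hrw : ∀ k, (∫⁻ x in Metric.ball (0 : EuclideanSpace ℝ (Fin N)) R,
      (‖g (x + z k)‖₊ : ℝ≥0∞) ^ p ∂volume)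
      = ∫⁻ x, (Metric.ball (z k) R).indicator F x ∂volume := by
    intro k
    rw [← lintegral_indicator Metric.isOpen_ball.measurableSet]
    have heq : ∀ x, (Metric.ball (0 : EuclideanSpace ℝ (Fin N)) R).indicator
        (fun x => (‖g (x + z k)‖₊ : ℝ≥0∞) ^ p) x
        = (Metric.ball (z k) R).indicator F (x + z k) := by
      intro x
      by_cases hx : x ∈ Metric.ball (0 : EuclideanSpace ℝ (Fin N)) R
      · have hx' : x + z k ∈ Metric.ball (z k) R := by
          rw [Metric.mem_ball] at hx ⊢
          simpa [dist_eq_norm] using hx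
        rw [Set.indicator_of_mem hx, Set.indicator_of_mem hx']
      · have hx' : x + z k ∉ Metric.ball (z k) R := by
          rw [Metric.mem_ball] at hx ⊢
          simpa [dist_eq_norm] using hx
        rw [Set.indicator_of_notMem hx, Set.indicator_of_notMem hx']
    simp_rw [heq]
    exact (measurePreserving_add_right volume (z k)).lintegral_comp_emb
      (measurableEmbedding_addRight (z k)) _
  simp_rw [hrw]
  have hlim : ∀ x : EuclideanSpace ℝ (Fin N),
      Tendsto (fun k => (Metric.ball (z k) R).indicator F x) atTop (nhds 0) := by
    intro x
    have hev : ∀ᶠ k in atTop, (Metric.ball (z k) R).indicator F x = 0 := by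
      filter_upwards [hz.eventually_ge_atTop (R + ‖x‖ + 1)] with k hk
      apply Set.indicator_of_notMem
      rw [Metric.mem_ball, dist_eq_norm]
      have : ‖z k‖ - ‖x‖ ≤ ‖x - z k‖ := by
        have := norm_sub_norm_le (z k) x
        calc ‖z k‖ - ‖x‖ ≤ ‖z k - x‖ := this
        _ = ‖x - z k‖ := norm_sub_rev _ _
      linarith
    exact tendsto_const_nhds.congr' (hev.mono fun k hk => hk.symm)
  have := tendsto_lintegral_of_dominated_convergence' F
    (fun k => hFm.indicator Metric.isOpen_ball.measurableSet)
    (fun k => ae_of_all _ fun x => Set.indicator_le_self _ _ x)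
    hFint (ae_of_all _ hlim)
  simpa using this

lemma stmt17_bc {N : ℕ} (p : ℝ) (hp0 : 0 < p)
    {g : EuclideanSpace ℝ (Fin N) → ℝ} (hm : AEStronglyMeasurable g volume)
    (G : ℕ → EuclideanSpace ℝ (Fin N))
    (hsum : ∀ j : ℕ, ∫⁻ x in Metric.ball (0 : EuclideanSpace ℝ (Fin N)) (j : ℝ),
        (‖g (x + G j)‖₊ : ℝ≥0∞) ^ p ∂volume ≤ 2⁻¹ ^ j) :
    ∀ᵐ x ∂(volume : Measure (EuclideanSpace ℝ (Fin N))),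
      Tendsto (fun j => g (x + G j)) atTop (nhds 0) := by
  set A : ℕ → EuclideanSpace ℝ (Fin N) → ℝ≥0∞ := fun j =>
    (Metric.ball (0 : EuclideanSpace ℝ (Fin N)) (j : ℝ)).indicator
      (fun x => (‖g (x + G j)‖₊ : ℝ≥0∞) ^ p) with hA_def
  have hgm : ∀ j, AEMeasurable (fun x => (‖g (x + G j)‖₊ : ℝ≥0∞) ^ p) volume := by
    intro j
    have : AEStronglyMeasurable (fun x => g (x + G j)) volume :=
      hm.comp_quasiMeasurePreserving
        (measurePreserving_add_right volume (G j)).quasiMeasurePreserving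
    exact ENNReal.continuous_rpow_const.measurable.comp_aemeasurable
      (this.aemeasurable.nnnorm.coe_nnreal_ennreal)
  have hAm : ∀ j, AEMeasurable (A j) volume := fun j =>
    (hgm j).indicator Metric.isOpen_ball.measurableSet
  have htsum : ∫⁻ x, ∑' j, A j x ∂volume ≤ 2 := by
    rw [lintegral_tsum hAm]
    have hle : ∀ j, ∫⁻ x, A j x ∂volume ≤ 2⁻¹ ^ j := by
      intro j
      rw [hA_def, lintegral_indicator Metric.isOpen_ball.measurableSet]
      exact hsum j
    calc ∑' j, ∫⁻ x, A j x ∂volume ≤ ∑' j : ℕ, (2⁻¹ : ℝ≥0∞) ^ j := ENNReal.tsum_le_tsum hle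
    _ = (1 - 2⁻¹)⁻¹ := ENNReal.tsum_geometric _
    _ = 2 := by rw [ENNReal.one_sub_inv_two, inv_inv]
  have hae_fin : ∀ᵐ x ∂(volume : Measure (EuclideanSpace ℝ (Fin N))), ∑' j, A j x < ⊤ :=
    ae_lt_top' (AEMeasurable.ennreal_tsum hAm) (lt_of_le_of_lt htsum (by norm_num)).ne
  filter_upwards [hae_fin] with x hx
  have h0 : Tendsto (fun j => A j x) atTop (nhds 0) :=
    ENNReal.tendsto_atTop_zero_of_tsum_ne_top hx.ne
  have hev : ∀ᶠ j in atTop, A j x = (‖g (x + G j)‖₊ : ℝ≥0∞) ^ p := by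
    rw [eventually_atTop]
    refine ⟨⌈‖x‖⌉₊ + 1, fun j hj => ?_⟩
    apply Set.indicator_of_mem
    rw [mem_ball_zero_iff]
    calc ‖x‖ ≤ (⌈‖x‖⌉₊ : ℝ) := Nat.le_ceil _
    _ < (j : ℝ) := by exact_mod_cast Nat.lt_of_succ_le hj
  have h1 : Tendsto (fun j => (‖g (x + G j)‖₊ : ℝ≥0∞) ^ p) atTop (nhds 0) :=
    h0.congr' hev
  have h2 : Tendsto (fun j => ((‖g (x + G j)‖₊ : ℝ≥0∞) ^ p) ^ p⁻¹) atTop (nhds 0) := by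
    have hc := (ENNReal.continuous_rpow_const (y := p⁻¹)).continuousAt (x := (0:ℝ≥0∞))
    have := hc.tendsto.comp h1
    rwa [ENNReal.zero_rpow_of_pos (by positivity)] at this
  have h3 : Tendsto (fun j => (‖g (x + G j)‖₊ : ℝ≥0∞)) atTop (nhds 0) := by
    have : ∀ j, ((‖g (x + G j)‖₊ : ℝ≥0∞) ^ p) ^ p⁻¹ = (‖g (x + G j)‖₊ : ℝ≥0∞) := fun j => by
      rw [← ENNReal.rpow_mul, mul_inv_cancel₀ hp0.ne', ENNReal.rpow_one]
    simpa [this] using h2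
  have h4 : Tendsto (fun j => ‖g (x + G j)‖) atTop (nhds 0) := by
    have := (ENNReal.tendsto_toReal (by norm_num : (0:ℝ≥0∞) ≠ ⊤)).comp h3
    simpa [Function.comp_def] using this
  exact tendsto_zero_iff_norm_tendsto_zero.2 h4

/-- iterated Brezis–Lieb lemma.  Suppose `1 ≤ p < ∞`.  For each
`n, k ∈ ℕ` let `y n k ∈ ℝ^N`, with `|y m k - y n k| → ∞` as `k → ∞` whenever `m ≠ n`.
Let `(u_k)` be a bounded sequence in `L^p(ℝ^N)` such that for each `n` the sequence
`u_k(· + y n k)` converges weakly in `L^p` and a.e. to `w n`.  Then for every `M`,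
`∫ |u_k|^p - ∑_{n<M} ∫ |w n|^p - ∫ |u_k - ∑_{n<M} w n (· - y n k)|^p → 0`. -/
theorem stmt17 (N : ℕ) (hN : 1 ≤ N) (p : ℝ) (hp : 1 ≤ p)
    (p' : ℝ≥0∞) (hp' : 1 / ENNReal.ofReal p + 1 / p' = 1)
    (y : ℕ → ℕ → EuclideanSpace ℝ (Fin N))
    (hy : ∀ m n, m ≠ n → Tendsto (fun k => ‖y m k - y n k‖) atTop atTop)
    (u : ℕ → EuclideanSpace ℝ (Fin N) → ℝ)
    (w : ℕ → EuclideanSpace ℝ (Fin N) → ℝ)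
    (hu : ∀ k, MemLp (u k) (ENNReal.ofReal p) volume)
    (hbdd : ∃ C : ℝ, ∀ k, eLpNorm (u k) (ENNReal.ofReal p) volume ≤ ENNReal.ofReal C)
    -- weak convergence of `u_k(· + y n k)` to `w n` in `L^p(ℝ^N)`:
    (hweak : ∀ n, ∀ h : EuclideanSpace ℝ (Fin N) → ℝ, MemLp h p' volume →
      Tendsto (fun k => ∫ x, u k (x + y n k) * h x) atTop (nhds (∫ x, w n x * h x)))
    -- a.e. convergence of `u_k(· + y n k)` to `w n`:
    (hae : ∀ n, ∀ᵐ x ∂volume,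
      Tendsto (fun k => u k (x + y n k)) atTop (nhds (w n x))) :
    ∀ M : ℕ,
      Tendsto (fun k =>
          (∫ x, |u k x| ^ p) - (∑ n ∈ Finset.range M, ∫ x, |w n x| ^ p) -
            ∫ x, |u k x - ∑ n ∈ Finset.range M, w n (x - y n k)| ^ p)
        atTop (nhds 0) := by
  classical
  have hp0 : 0 < p := lt_of_lt_of_le one_pos hp
  have hq0 : ENNReal.ofReal p ≠ 0 := by simp [ENNReal.ofReal_eq_zero, not_le, hp0]
  have hqt : ENNReal.ofReal p ≠ ⊤ := ENNReal.ofReal_ne_top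
  have hq1 : 1 ≤ ENNReal.ofReal p := by
    rw [← ENNReal.ofReal_one]; exact ENNReal.ofReal_le_ofReal hp
  obtain ⟨C, hC⟩ := hbdd
  have hsum_fun : ∀ (s : Finset ℕ) (c : ℕ → EuclideanSpace ℝ (Fin N)),
      (∑ n ∈ s, fun x => w n (x + c n)) = fun x => ∑ n ∈ s, w n (x + c n) := by
    intro s c
    funext x
    simp
  -- translates of `u k`
  have hu' : ∀ n k, MemLp (fun x => u k (x + y n k)) (ENNReal.ofReal p) volume := fun n k =>
    (hu k).comp_measurePreserving (measurePreserving_add_right volume (y n k))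
  have hu'norm : ∀ n k, eLpNorm (fun x => u k (x + y n k)) (ENNReal.ofReal p) volume
      = eLpNorm (u k) (ENNReal.ofReal p) volume := fun n k =>
    eLpNorm_comp_measurePreserving (hu k).aestronglyMeasurable
      (measurePreserving_add_right volume (y n k))
  -- each `w n` is in `L^p`
  have hw : ∀ n, MemLp (w n) (ENNReal.ofReal p) volume := by
    intro n
    have hsm : AEStronglyMeasurable (w n) volume :=
      aestronglyMeasurable_of_tendsto_ae atTop (fun k => (hu' n k).aestronglyMeasurable) (hae n)
    refine ⟨hsm, ?_⟩
    have hle := MeasureTheory.Lp.eLpNorm_lim_le_liminf_eLpNorm (p := ENNReal.ofReal p)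
      (fun k => (hu' n k).aestronglyMeasurable) (w n) (hae n)
    refine lt_of_le_of_lt (hle.trans ?_) (ENNReal.ofReal_lt_top (r := C))
    apply Filter.liminf_le_of_frequently_le'
    apply Filter.Eventually.frequently
    filter_upwards with k
    rw [hu'norm n k]
    exact hC k
  -- translates of `w n`
  have hwt : ∀ n (c : EuclideanSpace ℝ (Fin N)),
      MemLp (fun x => w n (x + c)) (ENNReal.ofReal p) volume := fun n c =>
    (hw n).comp_measurePreserving (measurePreserving_add_right volume c)
  have hwt' : ∀ n (c : EuclideanSpace ℝ (Fin N)),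
      MemLp (fun x => w n (x - c)) (ENNReal.ofReal p) volume := fun n c =>
    (hw n).comp_measurePreserving (measurePreserving_sub_right volume c)
  have hwtnorm : ∀ n (c : EuclideanSpace ℝ (Fin N)),
      eLpNorm (fun x => w n (x + c)) (ENNReal.ofReal p) volume
      = eLpNorm (w n) (ENNReal.ofReal p) volume := fun n c =>
    eLpNorm_comp_measurePreserving (hw n).aestronglyMeasurable
      (measurePreserving_add_right volume c)
  intro M
  induction M with
  | zero =>
    simp only [Finset.range_zero, Finset.sum_empty, sub_zero, sub_self]
    exact tendsto_const_nhds
  | succ M ih =>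
    -- the sequence of "remainders" shifted by `y M k`
    set v : ℕ → EuclideanSpace ℝ (Fin N) → ℝ := fun k x =>
      u k (x + y M k) - ∑ n ∈ Finset.range M, w n (x + (y M k - y n k)) with hv_def
    have hv : ∀ k, MemLp (v k) (ENNReal.ofReal p) volume := by
      intro k
      apply (hu' M k).sub
      have := memLp_finsetSum' (Finset.range M)
        (f := fun n x => w n (x + (y M k - y n k)))
        (fun n _ => hwt n (y M k - y n k))
      rwa [hsum_fun (Finset.range M) (fun n => y M k - y n k)] at this
    -- change of variables in the two remainder integrals
    have hJM : ∀ k, (∫ x, |u k x - ∑ n ∈ Finset.range M, w n (x - y n k)| ^ p)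
        = ∫ x, |v k x| ^ p := by
      intro k
      rw [← (measurePreserving_add_right volume (y M k)).integral_comp
        (measurableEmbedding_addRight (y M k))
        (fun x => |u k x - ∑ n ∈ Finset.range M, w n (x - y n k)| ^ p)]
      apply integral_congr_ae
      apply Filter.EventuallyEq.of_eq
      funext x
      have hx : ∀ n, x + y M k - y n k = x + (y M k - y n k) := fun n => by abel
      simp only [hv_def]
      have hss : ∑ n ∈ Finset.range M, w n (x + y M k - y n k)
          = ∑ n ∈ Finset.range M, w n (x + (y M k - y n k)) :=
        Finset.sum_congr rfl fun n _ => by rw [hx n]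
      rw [hss]
    have hJM1 : ∀ k, (∫ x, |u k x - ∑ n ∈ Finset.range (M + 1), w n (x - y n k)| ^ p)
        = ∫ x, |v k x - w M x| ^ p := by
      intro k
      rw [← (measurePreserving_add_right volume (y M k)).integral_comp
        (measurableEmbedding_addRight (y M k))
        (fun x => |u k x - ∑ n ∈ Finset.range (M + 1), w n (x - y n k)| ^ p)]
      apply integral_congr_ae
      apply Filter.EventuallyEq.of_eq
      funext x
      have hsum : ∑ n ∈ Finset.range (M + 1), w n (x + y M k - y n k)
          = (∑ n ∈ Finset.range M, w n (x + (y M k - y n k))) + w M x := by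
        rw [Finset.sum_range_succ]
        congr 1
        · apply Finset.sum_congr rfl
          intro n _
          congr 1
          abel
        · congr 1
          abel
      rw [hsum]
      simp only [hv_def]
      congr 1
      ring
    -- the key limit via Brezis–Lieb applied along subsequences
    have key : Tendsto (fun k =>
        (∫ x, |u k x - ∑ n ∈ Finset.range M, w n (x - y n k)| ^ p)
          - ∫ x, |u k x - ∑ n ∈ Finset.range (M + 1), w n (x - y n k)| ^ p)
        atTop (nhds (∫ x, |w M x| ^ p)) := by
      have hfun : (fun k =>
          (∫ x, |u k x - ∑ n ∈ Finset.range M, w n (x - y n k)| ^ p)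
            - ∫ x, |u k x - ∑ n ∈ Finset.range (M + 1), w n (x - y n k)| ^ p)
          = fun k => (∫ x, |v k x| ^ p) - ∫ x, |v k x - w M x| ^ p := by
        funext k; rw [hJM, hJM1]
      rw [hfun]
      -- uniform L^p bound on `v k - w M`
      set D : ℝ≥0∞ := ENNReal.ofReal C
        + ∑ n ∈ Finset.range (M + 1), eLpNorm (w n) (ENNReal.ofReal p) volume with hD_def
      have hD : D ≠ ⊤ := by
        rw [hD_def]
        apply ENNReal.add_ne_top.2
        constructor
        · exact ENNReal.ofReal_ne_top
        · exact (ENNReal.sum_lt_top.2 fun n _ => (hw n).2).ne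
      have hDb : ∀ k, eLpNorm (fun x => v k x - w M x) (ENNReal.ofReal p) volume ≤ D := by
        intro k
        have hrw : (fun x => v k x - w M x)
            = fun x => u k (x + y M k)
              - ∑ n ∈ Finset.range (M + 1), w n (x + (y M k - y n k)) := by
          funext x
          rw [hv_def, Finset.sum_range_succ]
          have : w M (x + (y M k - y M k)) = w M x := by
            congr 1
            abel
          rw [this]
          ring_nf
        rw [hrw]
        have hsmm : ∀ n ∈ Finset.range (M + 1),
            AEStronglyMeasurable (fun x => w n (x + (y M k - y n k))) volume :=
          fun n _ => (hwt n (y M k - y n k)).aestronglyMeasurable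
        have h1 : eLpNorm (fun x => u k (x + y M k)
              - ∑ n ∈ Finset.range (M + 1), w n (x + (y M k - y n k)))
              (ENNReal.ofReal p) volume
            ≤ eLpNorm (fun x => u k (x + y M k)) (ENNReal.ofReal p) volume
              + eLpNorm (fun x => ∑ n ∈ Finset.range (M + 1), w n (x + (y M k - y n k)))
                (ENNReal.ofReal p) volume := by
          have := eLpNorm_sub_le (μ := volume) (p := ENNReal.ofReal p)
            (f := fun x => u k (x + y M k))
            (g := fun x => ∑ n ∈ Finset.range (M + 1), w n (x + (y M k - y n k)))
            (hu' M k).aestronglyMeasurable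
            (by
              have := memLp_finsetSum' (Finset.range (M + 1))
                (f := fun n x => w n (x + (y M k - y n k)))
                (fun n _ => hwt n (y M k - y n k))
              rw [hsum_fun (Finset.range (M + 1)) (fun n => y M k - y n k)] at this
              exact this.aestronglyMeasurable) hq1
          exact this
        have h2 : eLpNorm (fun x => ∑ n ∈ Finset.range (M + 1), w n (x + (y M k - y n k)))
              (ENNReal.ofReal p) volume
            ≤ ∑ n ∈ Finset.range (M + 1), eLpNorm (w n) (ENNReal.ofReal p) volume := by
          have := eLpNorm_sum_le (μ := volume) (p := ENNReal.ofReal p)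
            (f := fun n x => w n (x + (y M k - y n k))) (s := Finset.range (M + 1)) hsmm hq1
          refine le_trans ?_ (this.trans ?_)
          · apply le_of_eq
            congr 1
            funext x
            simp
          · apply le_of_eq
            apply Finset.sum_congr rfl
            intro n _
            exact hwtnorm n (y M k - y n k)
        calc eLpNorm _ (ENNReal.ofReal p) volume
            ≤ _ + _ := h1
          _ ≤ ENNReal.ofReal C
              + ∑ n ∈ Finset.range (M + 1), eLpNorm (w n) (ENNReal.ofReal p) volume := by
            apply add_le_add
            · rw [hu'norm M k]; exact hC k
            · exact h2
      -- argue along subsequences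
      apply Filter.tendsto_of_subseq_tendsto
      intro ns hns
      have hev : ∀ j : ℕ, ∀ᶠ k in atTop, ∀ n, n < M →
          ∫⁻ x in Metric.ball (0 : EuclideanSpace ℝ (Fin N)) (j : ℝ),
            (‖w n (x + (y M (ns k) - y n (ns k)))‖₊ : ℝ≥0∞) ^ p ∂volume ≤ 2⁻¹ ^ j := by
        intro j
        have : ∀ n, n < M → ∀ᶠ k in atTop,
            ∫⁻ x in Metric.ball (0 : EuclideanSpace ℝ (Fin N)) (j : ℝ),
              (‖w n (x + (y M (ns k) - y n (ns k)))‖₊ : ℝ≥0∞) ^ p ∂volume ≤ 2⁻¹ ^ j := by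
          intro n hn
          have hzn : Tendsto (fun k => ‖y M k - y n k‖) atTop atTop := hy M n hn.ne'
          have htd := (stmt17_escape p hp0 (hw n) (z := fun k => y M k - y n k) hzn (j : ℝ)).comp hns
          have hpos : (0 : ℝ≥0∞) < 2⁻¹ ^ j := by
            apply ENNReal.pow_pos
            simp
          exact (htd.eventually_lt_const hpos).mono fun k hk => hk.le
        -- combine finitely many eventual statements
        have : ∀ᶠ k in atTop, ∀ n ∈ Finset.range M,
            ∫⁻ x in Metric.ball (0 : EuclideanSpace ℝ (Fin N)) (j : ℝ),
              (‖w n (x + (y M (ns k) - y n (ns k)))‖₊ : ℝ≥0∞) ^ p ∂volume ≤ 2⁻¹ ^ j := by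
          apply (Filter.eventually_all_finset (Finset.range M)).2
          intro n hn
          exact this n (Finset.mem_range.1 hn)
        filter_upwards [this] with k hk n hn
        exact hk n (Finset.mem_range.2 hn)
      obtain ⟨ms, hms_mono, hms⟩ := Filter.extraction_forall_of_eventually hev
      refine ⟨ms, ?_⟩
      set ψ : ℕ → ℕ := fun j => ns (ms j) with hψ_def
      have hψ : Tendsto ψ atTop atTop := hns.comp hms_mono.tendsto_atTop
      -- a.e. convergence of `v (ψ j)` to `w M`
      have haeM : ∀ᵐ x ∂(volume : Measure (EuclideanSpace ℝ (Fin N))),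
          Tendsto (fun j => u (ψ j) (x + y M (ψ j))) atTop (nhds (w M x)) :=
        (hae M).mono fun x hx => hx.comp hψ
      have haen : ∀ n, n < M → ∀ᵐ x ∂(volume : Measure (EuclideanSpace ℝ (Fin N))),
          Tendsto (fun j => w n (x + (y M (ψ j) - y n (ψ j)))) atTop (nhds 0) := by
        intro n hn
        exact stmt17_bc p hp0 (hw n).aestronglyMeasurable
          (fun j => y M (ψ j) - y n (ψ j)) (fun j => hms j n hn)
      have hall : ∀ᵐ x ∂(volume : Measure (EuclideanSpace ℝ (Fin N))), ∀ n, n < M →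
          Tendsto (fun j => w n (x + (y M (ψ j) - y n (ψ j)))) atTop (nhds 0) := by
        rw [MeasureTheory.ae_all_iff]
        intro n
        by_cases hn : n < M
        · exact (haen n hn).mono fun x hx _ => hx
        · exact Filter.Eventually.of_forall fun x hn' => absurd hn' hn
      have haev : ∀ᵐ x ∂(volume : Measure (EuclideanSpace ℝ (Fin N))),
          Tendsto (fun j => v (ψ j) x) atTop (nhds (w M x)) := by
        filter_upwards [haeM, hall] with x h1 h2
        have hsum0 : Tendsto (fun j => ∑ n ∈ Finset.range M,
            w n (x + (y M (ψ j) - y n (ψ j)))) atTop (nhds 0) := by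
          have := tendsto_finset_sum (Finset.range M)
            (fun n hn => h2 n (Finset.mem_range.1 hn))
          simpa using this
        have := h1.sub hsum0
        simpa [hv_def] using this
      -- apply Brezis–Lieb
      have hB : ∃ B : ℝ, ∀ j, ∫ x, |v (ψ j) x - w M x| ^ p ≤ B :=
        ⟨D.toReal ^ p, fun j => stmt17_integral_rpow_le p hp
          ((hv (ψ j)).sub (hw M)) hD (hDb (ψ j))⟩
      exact stmt17_brezisLieb p hp (fun j => hv (ψ j)) (hw M) hB haev
    -- combine with the induction hypothesis
    have hfun2 : (fun k =>
        (∫ x, |u k x| ^ p) - (∑ n ∈ Finset.range (M + 1), ∫ x, |w n x| ^ p) -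
          ∫ x, |u k x - ∑ n ∈ Finset.range (M + 1), w n (x - y n k)| ^ p)
        = fun k =>
          ((∫ x, |u k x| ^ p) - (∑ n ∈ Finset.range M, ∫ x, |w n x| ^ p) -
            ∫ x, |u k x - ∑ n ∈ Finset.range M, w n (x - y n k)| ^ p)
          + (((∫ x, |u k x - ∑ n ∈ Finset.range M, w n (x - y n k)| ^ p)
              - ∫ x, |u k x - ∑ n ∈ Finset.range (M + 1), w n (x - y n k)| ^ p)
            - ∫ x, |w M x| ^ p) := by
      funext k
      rw [Finset.sum_range_succ]
      ring
    rw [hfun2]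
    have h2 : Tendsto (fun k =>
        ((∫ x, |u k x - ∑ n ∈ Finset.range M, w n (x - y n k)| ^ p)
          - ∫ x, |u k x - ∑ n ∈ Finset.range (M + 1), w n (x - y n k)| ^ p)
        - ∫ x, |w M x| ^ p) atTop (nhds 0) := by
      have := key.sub (tendsto_const_nhds (x := ∫ x, |w M x| ^ p))
      simpa using this
    have := ih.add h2
    simpa using this
end
end
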